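/- arXiv:1807.00614 — 2 statements merged into one kernel-verified Lean document; each statement's English description precedes it below -/
import Mathlib

section
/- Let A be a commutative semiring, V a finite type of propositional variables, α : V → Bool → A a labeling such that (+, α) is neutral, and C a circuit over V in d-DNNF (decomposable and deterministic). Then eval(C) = AMC(C), i.e. the bottom-up semiring evaluation of the circuit equals its algebraic model count ∑_{τ : V → Bool, τ satisfies C} ∏_{v : V} α v (τ v). -/
/-- NNF circuits over a type `V` of propositional variables: literals,
conjunctions and disjunctions. -/
inductive Circuit (V : Type*) where
  | lit : V → Bool → Circuit V
  | and : Circuit V → Circuit V → Circuit V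
  | or : Circuit V → Circuit V → Circuit V

namespace Circuit

/-- The set of variables occurring in a circuit. -/
def vars {V : Type*} : Circuit V → Set V
  | lit v _ => {v}
  | and c₁ c₂ => c₁.vars ∪ c₂.vars
  | or c₁ c₂ => c₁.vars ∪ c₂.vars

/-- Satisfaction of a circuit by an assignment `τ : V → Bool`. -/
def sat {V : Type*} : Circuit V → (V → Bool) → Bool
  | lit v s, τ => τ v == s
  | and c₁ c₂, τ => c₁.sat τ && c₂.sat τ
  | or c₁ c₂, τ => c₁.sat τ || c₂.sat τ

/-- A circuit is in d-DNNF if every conjunction is decomposable (the conjuncts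
mention disjoint sets of variables) and every disjunction is deterministic (no
assignment satisfies both disjuncts). -/
def dDNNF {V : Type*} : Circuit V → Prop
  | lit _ _ => True
  | and c₁ c₂ => Disjoint c₁.vars c₂.vars ∧ c₁.dDNNF ∧ c₂.dDNNF
  | or c₁ c₂ => (∀ τ : V → Bool, ¬(c₁.sat τ = true ∧ c₂.sat τ = true)) ∧
      c₁.dDNNF ∧ c₂.dDNNF

/-- Bottom-up semiring evaluation of a circuit with literal labels `α`. -/
def eval {V A : Type*} [CommSemiring A] (α : V → Bool → A) : Circuit V → A
  | lit v s => α v s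
  | and c₁ c₂ => c₁.eval α * c₂.eval α
  | or c₁ c₂ => c₁.eval α + c₂.eval α

lemma sat_congr {V : Type*} (c : Circuit V) {τ σ : V → Bool}
    (h : ∀ v ∈ c.vars, τ v = σ v) : c.sat τ = c.sat σ := by
  induction c with
  | lit v s => simp [sat, h v (by simp [vars])]
  | and c₁ c₂ ih₁ ih₂ =>
      simp only [sat, ih₁ (fun v hv => h v (Or.inl hv)),
        ih₂ (fun v hv => h v (Or.inr hv))]
  | or c₁ c₂ ih₁ ih₂ =>
      simp only [sat, ih₁ (fun v hv => h v (Or.inl hv)),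
        ih₂ (fun v hv => h v (Or.inr hv))]

/-- Finset of variables of a circuit. -/
def varsF {V : Type*} [DecidableEq V] : Circuit V → Finset V
  | lit v _ => {v}
  | and c₁ c₂ => c₁.varsF ∪ c₂.varsF
  | or c₁ c₂ => c₁.varsF ∪ c₂.varsF

lemma mem_varsF {V : Type*} [DecidableEq V] (c : Circuit V) (v : V) :
    v ∈ c.varsF ↔ v ∈ c.vars := by
  induction c with
  | lit w s => simp [varsF, vars]
  | and c₁ c₂ ih₁ ih₂ => simp [varsF, vars, ih₁, ih₂]
  | or c₁ c₂ ih₁ ih₂ => simp [varsF, vars, ih₁, ih₂]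

end Circuit

section Aux

variable {V A : Type*} [Fintype V] [DecidableEq V] [CommSemiring A]

lemma sum_pi_prod (g : V → Bool → A) :
    ∑ τ : V → Bool, ∏ v, g v (τ v) = ∏ v, (g v true + g v false) := by
  rw [show (Finset.univ : Finset (V → Bool)) =
      Fintype.piFinset (fun _ => (Finset.univ : Finset Bool)) from
      (Fintype.piFinset_univ).symm,
    ← Finset.prod_univ_sum]
  simp

lemma sum_prod_one (α : V → Bool → A) (h : ∀ v, α v true + α v false = 1) :
    ∑ τ : V → Bool, ∏ v, α v (τ v) = 1 := by
  rw [sum_pi_prod]; simp [h]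

/-- Key splitting lemma: if `f` only depends on the values on `p` and `g` only
on the values off `p`, then the weighted sum of the conjunction factorizes. -/
lemma key_split (α : V → Bool → A) (hneutral : ∀ v, α v true + α v false = 1)
    (p : V → Prop) [DecidablePred p] (f g : (V → Bool) → Bool)
    (hf : ∀ τ σ : V → Bool, (∀ v, p v → τ v = σ v) → f τ = f σ)
    (hg : ∀ τ σ : V → Bool, (∀ v, ¬ p v → τ v = σ v) → g τ = g σ) :
    (∑ τ : V → Bool, if f τ && g τ then ∏ v, α v (τ v) else 0)
      = (∑ τ : V → Bool, if f τ then ∏ v, α v (τ v) else 0)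
        * (∑ τ : V → Bool, if g τ then ∏ v, α v (τ v) else 0) := by
  classical
  set e := Equiv.piEquivPiSubtypeProd p (fun _ : V => Bool) with he
  have hsum : ∀ F : (V → Bool) → A,
      ∑ τ : V → Bool, F τ
        = ∑ x : ({v // p v} → Bool) × ({v // ¬ p v} → Bool), F (e.symm x) :=
    fun F => (Equiv.sum_comp e.symm F).symm
  have hprod : ∀ (τ₁ : {v // p v} → Bool) (τ₂ : {v // ¬ p v} → Bool),
      ∏ v, α v (e.symm (τ₁, τ₂) v)
        = (∏ v : {v // p v}, α v.1 (τ₁ v)) * (∏ v : {v // ¬ p v}, α v.1 (τ₂ v)) := by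
    intro τ₁ τ₂
    rw [← Fintype.prod_subtype_mul_prod_subtype p (fun v => α v (e.symm (τ₁, τ₂) v))]
    congr 1 <;> refine Finset.prod_congr rfl fun x _ => ?_ <;>
      simp [he, Equiv.piEquivPiSubtypeProd, x.2]
  have hfval : ∀ (τ₁ : {v // p v} → Bool) (τ₂ : {v // ¬ p v} → Bool),
      f (e.symm (τ₁, τ₂)) = f (e.symm (τ₁, fun _ => false)) := by
    intro τ₁ τ₂
    refine hf _ _ fun v hv => ?_
    simp [he, Equiv.piEquivPiSubtypeProd, hv]
  have hgval : ∀ (τ₁ : {v // p v} → Bool) (τ₂ : {v // ¬ p v} → Bool),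
      g (e.symm (τ₁, τ₂)) = g (e.symm (fun _ => false, τ₂)) := by
    intro τ₁ τ₂
    refine hg _ _ fun v hv => ?_
    simp [he, Equiv.piEquivPiSubtypeProd, hv]
  rw [hsum, hsum, hsum]
  rw [Fintype.sum_prod_type, Fintype.sum_prod_type, Fintype.sum_prod_type]
  have h1 : ∑ τ₁ : {v // p v} → Bool, ∏ v : {v // p v}, α v.1 (τ₁ v) = 1 :=
    sum_prod_one _ (fun v => hneutral v.1)
  have h2 : ∑ τ₂ : {v // ¬ p v} → Bool, ∏ v : {v // ¬ p v}, α v.1 (τ₂ v) = 1 :=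
    sum_prod_one _ (fun v => hneutral v.1)
  calc
    ∑ τ₁ : {v // p v} → Bool, ∑ τ₂ : {v // ¬ p v} → Bool, (if f (e.symm (τ₁, τ₂)) && g (e.symm (τ₁, τ₂)) then
        ∏ v, α v (e.symm (τ₁, τ₂) v) else 0)
      = ∑ τ₁ : {v // p v} → Bool, ∑ τ₂ : {v // ¬ p v} → Bool,
          (if f (e.symm (τ₁, fun _ => false)) then ∏ v : {v // p v}, α v.1 (τ₁ v) else 0)
            * (if g (e.symm (fun _ => false, τ₂)) then ∏ v : {v // ¬ p v}, α v.1 (τ₂ v) else 0) := by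
        refine Finset.sum_congr rfl fun τ₁ _ => Finset.sum_congr rfl fun τ₂ _ => ?_
        rw [hprod, hfval τ₁ τ₂, hgval τ₁ τ₂]
        by_cases h1 : f (e.symm (τ₁, fun _ => false)) <;>
          by_cases h2 : g (e.symm (fun _ => false, τ₂)) <;> simp [h1, h2]
    _ = (∑ τ₁, if f (e.symm (τ₁, fun _ => false)) then ∏ v : {v // p v}, α v.1 (τ₁ v) else 0)
          * (∑ τ₂, if g (e.symm (fun _ => false, τ₂)) then ∏ v : {v // ¬ p v}, α v.1 (τ₂ v) else 0) := by
        rw [← Finset.sum_mul_sum]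
    _ = (∑ τ₁ : {v // p v} → Bool, ∑ τ₂ : {v // ¬ p v} → Bool, if f (e.symm (τ₁, τ₂)) then ∏ v, α v (e.symm (τ₁, τ₂) v) else 0)
          * (∑ τ₁ : {v // p v} → Bool, ∑ τ₂ : {v // ¬ p v} → Bool, if g (e.symm (τ₁, τ₂)) then ∏ v, α v (e.symm (τ₁, τ₂) v) else 0) := by
        congr 1
        · symm
          calc
            ∑ τ₁ : {v // p v} → Bool, ∑ τ₂ : {v // ¬ p v} → Bool, (if f (e.symm (τ₁, τ₂)) then ∏ v, α v (e.symm (τ₁, τ₂) v) else 0)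
                = ∑ τ₁ : {v // p v} → Bool, ∑ τ₂ : {v // ¬ p v} → Bool,
                    (if f (e.symm (τ₁, fun _ => false)) then
                      ∏ v : {v // p v}, α v.1 (τ₁ v) else 0)
                      * ∏ v : {v // ¬ p v}, α v.1 (τ₂ v) := by
                  refine Finset.sum_congr rfl fun τ₁ _ => Finset.sum_congr rfl fun τ₂ _ => ?_
                  rw [hprod, hfval τ₁ τ₂]
                  by_cases hc : f (e.symm (τ₁, fun _ => false)) <;> simp [hc]
              _ = ∑ τ₁ : {v // p v} → Bool, (if f (e.symm (τ₁, fun _ => false)) then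
                    ∏ v : {v // p v}, α v.1 (τ₁ v) else 0)
                    * ∑ τ₂ : {v // ¬ p v} → Bool, ∏ v : {v // ¬ p v}, α v.1 (τ₂ v) := by
                  refine Finset.sum_congr rfl fun τ₁ _ => ?_
                  rw [Finset.mul_sum]
              _ = _ := by rw [h2]; simp
        · symm
          rw [Finset.sum_comm]
          calc
            ∑ τ₂ : {v // ¬ p v} → Bool, ∑ τ₁ : {v // p v} → Bool, (if g (e.symm (τ₁, τ₂)) then ∏ v, α v (e.symm (τ₁, τ₂) v) else 0)
                = ∑ τ₂ : {v // ¬ p v} → Bool, ∑ τ₁ : {v // p v} → Bool,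
                    (∏ v : {v // p v}, α v.1 (τ₁ v)) *
                    (if g (e.symm (fun _ => false, τ₂)) then
                      ∏ v : {v // ¬ p v}, α v.1 (τ₂ v) else 0) := by
                  refine Finset.sum_congr rfl fun τ₂ _ => Finset.sum_congr rfl fun τ₁ _ => ?_
                  rw [hprod, hgval τ₁ τ₂]
                  by_cases hc : g (e.symm (fun _ => false, τ₂)) <;> simp [hc]
              _ = ∑ τ₂ : {v // ¬ p v} → Bool, (∑ τ₁ : {v // p v} → Bool, ∏ v : {v // p v}, α v.1 (τ₁ v)) *
                    (if g (e.symm (fun _ => false, τ₂)) then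
                      ∏ v : {v // ¬ p v}, α v.1 (τ₂ v) else 0) := by
                  refine Finset.sum_congr rfl fun τ₂ _ => ?_
                  rw [Finset.sum_mul]
              _ = _ := by rw [h1]; simp


lemma eval_eq_amc_aux (α : V → Bool → A)
    (hneutral : ∀ v : V, α v true + α v false = 1) :
    ∀ C : Circuit V, C.dDNNF →
      C.eval α = ∑ τ : V → Bool, if C.sat τ then ∏ v, α v (τ v) else 0 := by
  intro C
  induction C with
  | lit v s =>
      intro _
      have hrw : ∀ τ : V → Bool,
          (if (Circuit.lit v s).sat τ then ∏ w, α w (τ w) else 0)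
            = ∏ w, (if w = v then (if τ w = s then α w (τ w) else 0) else α w (τ w)) := by
        intro τ
        by_cases h : τ v = s
        · rw [if_pos (by simp [Circuit.sat, h])]
          refine Finset.prod_congr rfl fun w _ => ?_
          by_cases hw : w = v
          · subst hw; simp [h]
          · simp [hw]
        · rw [if_neg (by simp [Circuit.sat, h])]
          symm
          exact Finset.prod_eq_zero (Finset.mem_univ v) (by simp [h])
      simp only [hrw]
      rw [sum_pi_prod (fun w b => if w = v then (if b = s then α w b else 0) else α w b)]
      rw [Finset.prod_eq_single v]
      · simp [Circuit.eval]
        cases s <;> simp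
      · intro w _ hw; simp [hw, hneutral w]
      · intro h; exact absurd (Finset.mem_univ v) h
  | and c₁ c₂ ih₁ ih₂ =>
      rintro ⟨hdisj, h1, h2⟩
      have hf : ∀ τ σ : V → Bool, (∀ v, v ∈ c₁.varsF → τ v = σ v) →
          c₁.sat τ = c₁.sat σ := fun τ σ h =>
        Circuit.sat_congr c₁ (fun v hv => h v ((Circuit.mem_varsF c₁ v).2 hv))
      have hg : ∀ τ σ : V → Bool, (∀ v, ¬ v ∈ c₁.varsF → τ v = σ v) →
          c₂.sat τ = c₂.sat σ := by
        intro τ σ h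
        refine Circuit.sat_congr c₂ (fun v hv => h v ?_)
        intro hv1
        exact Set.disjoint_left.mp hdisj ((Circuit.mem_varsF c₁ v).1 hv1) hv
      have := key_split α hneutral (fun v => v ∈ c₁.varsF) c₁.sat c₂.sat hf hg
      simp only [Circuit.eval, Circuit.sat, ih₁ h1, ih₂ h2]
      rw [← this]
      congr!
  | or c₁ c₂ ih₁ ih₂ =>
      rintro ⟨hdet, h1, h2⟩
      simp only [Circuit.eval, Circuit.sat, ih₁ h1, ih₂ h2]
      rw [← Finset.sum_add_distrib]
      refine Finset.sum_congr rfl fun τ _ => ?_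
      by_cases ha : c₁.sat τ <;> by_cases hb : c₂.sat τ
      · exact absurd ⟨ha, hb⟩ (hdet τ)
      · simp [ha, hb]
      · simp [ha, hb]
      · simp [ha, hb]

end Aux

/-- On a d-DNNF circuit, for a neutral pair `(+, α)`, the bottom-up evaluation
equals the algebraic model count. -/
theorem eval_eq_amc {V A : Type*} [Fintype V] [DecidableEq V] [CommSemiring A]
    (α : V → Bool → A) (hneutral : ∀ v : V, α v true + α v false = 1)
    (C : Circuit V) (hC : C.dDNNF) :
    C.eval α =
      ∑ τ ∈ Finset.univ.filter (fun τ : V → Bool => C.sat τ = true),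
        ∏ v : V, α v (τ v) := by
  rw [Finset.sum_filter]
  exact eval_eq_amc_aux α hneutral C hC
end

section
/- Define Ψ : (Fin N → ℝ) → ℝ≥0∞ by Ψ x = ∑ over all pairs (b, c) with b : J → Bool, c : K → Bool and φ b c = true of (∏_{j : J} w j (b j)) · ∏_{k : K} (if c k then Set.indicator (S k) 1 x else Set.indicator (S k)ᶜ 1 x). Then ∫⁻ x, Ψ x · ∏_{i : Fin N} f i (x i) ∂λ^N = WMI, i.e. the integral of the algebraic model count Ψ multiplied by the product of the densities equals the weighted model integral ∑_{b : J → Bool} ∫⁻ x in {x | φ b (fun k => decide (x ∈ S k)) = true}, (∏_{j : J} w j (b j)) · ∏_{i : Fin N} f i (x i) ∂λ^N. -/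
open MeasureTheory
open scoped ENNReal

open Classical in
/-- The Lebesgue integral of the algebraic model count `Ψ` multiplied by the
product of the densities equals the weighted model integral. -/
theorem lintegral_amc_eq_wmi {J K : Type*} [Fintype J] [Fintype K]
    [DecidableEq J] [DecidableEq K] {N : ℕ}
    (φ : (J → Bool) → (K → Bool) → Bool)
    (S : K → Set (Fin N → ℝ)) (hS : ∀ k, MeasurableSet (S k))
    (w : J → Bool → ℝ≥0∞)
    (f : Fin N → ℝ → ℝ≥0∞) (hf : ∀ i, Measurable (f i)) :
    (∫⁻ x : Fin N → ℝ,
        (∑ bc ∈ Finset.univ.filter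
            (fun bc : (J → Bool) × (K → Bool) => φ bc.1 bc.2 = true),
          (∏ j : J, w j (bc.1 j)) *
            ∏ k : K, (if bc.2 k then (S k).indicator (1 : (Fin N → ℝ) → ℝ≥0∞) x
              else (S k)ᶜ.indicator (1 : (Fin N → ℝ) → ℝ≥0∞) x)) *
          ∏ i : Fin N, f i (x i) ∂volume) =
    ∑ b : J → Bool,
      ∫⁻ x in {x : Fin N → ℝ | φ b (fun k => decide (x ∈ S k)) = true},
        (∏ j : J, w j (b j)) * ∏ i : Fin N, f i (x i) ∂volume := by
  classical
  set g : (Fin N → ℝ) → ℝ≥0∞ := fun x => ∏ i, f i (x i) with hg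
  have hgmeas : Measurable g := by
    apply Finset.measurable_prod
    intro i _
    exact (hf i).comp (measurable_pi_apply i)
  set C : (K → Bool) → Set (Fin N → ℝ) :=
    fun c => {x | (fun k => decide (x ∈ S k)) = c} with hC
  have hCmeas : ∀ c, MeasurableSet (C c) := by
    intro c
    have hEq : C c = ⋂ k, (if c k then S k else (S k)ᶜ) := by
      ext x
      simp only [hC, Set.mem_iInter, Set.mem_setOf_eq, funext_iff]
      constructor
      · intro h k
        have := h k
        by_cases hx : x ∈ S k <;> cases hck : c k <;> simp_all
      · intro h k
        have := h k
        by_cases hx : x ∈ S k <;> cases hck : c k <;> simp_all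
    rw [hEq]
    exact MeasurableSet.iInter fun k => by
      split
      · exact hS k
      · exact (hS k).compl
  -- pointwise product identity
  have hprod : ∀ (c : K → Bool) (x : Fin N → ℝ),
      (∏ k : K, (if c k then (S k).indicator (1 : (Fin N → ℝ) → ℝ≥0∞) x
        else (S k)ᶜ.indicator (1 : (Fin N → ℝ) → ℝ≥0∞) x))
      = (C c).indicator 1 x := by
    intro c x
    have hfac : ∀ k : K, (if c k then (S k).indicator (1 : (Fin N → ℝ) → ℝ≥0∞) x
        else (S k)ᶜ.indicator (1 : (Fin N → ℝ) → ℝ≥0∞) x)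
        = if decide (x ∈ S k) = c k then 1 else 0 := by
      intro k
      by_cases hx : x ∈ S k <;> cases hck : c k <;>
        simp [Set.indicator, hx, hck]
    by_cases hx : x ∈ C c
    · rw [Set.indicator_of_mem hx]
      apply Finset.prod_eq_one
      intro k _
      simp [hfac k, congrFun hx k]
    · rw [Set.indicator_of_notMem hx]
      have hne : ¬ ∀ k, decide (x ∈ S k) = c k := fun h => hx (funext h)
      push_neg at hne
      obtain ⟨k, hk⟩ := hne
      exact Finset.prod_eq_zero (Finset.mem_univ k) (by simp [hfac k, hk])
  -- rewrite LHS integrand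
  have hint : ∀ x : Fin N → ℝ,
      (∑ bc ∈ Finset.univ.filter
          (fun bc : (J → Bool) × (K → Bool) => φ bc.1 bc.2 = true),
        (∏ j : J, w j (bc.1 j)) *
          ∏ k : K, (if bc.2 k then (S k).indicator (1 : (Fin N → ℝ) → ℝ≥0∞) x
            else (S k)ᶜ.indicator (1 : (Fin N → ℝ) → ℝ≥0∞) x)) * g x
      = ∑ bc ∈ Finset.univ.filter
          (fun bc : (J → Bool) × (K → Bool) => φ bc.1 bc.2 = true),
        (C bc.2).indicator (fun y => (∏ j : J, w j (bc.1 j)) * g y) x := by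
    intro x
    rw [Finset.sum_mul]
    refine Finset.sum_congr rfl fun bc _ => ?_
    rw [hprod bc.2 x]
    by_cases hx : x ∈ C bc.2 <;>
      simp [Set.indicator_of_mem, Set.indicator_of_notMem, hx]
  have hmeas : ∀ bc : (J → Bool) × (K → Bool),
      Measurable ((C bc.2).indicator (fun y => (∏ j : J, w j (bc.1 j)) * g y)) :=
    fun bc => (measurable_const.mul hgmeas).indicator (hCmeas bc.2)
  calc (∫⁻ x : Fin N → ℝ,
        (∑ bc ∈ Finset.univ.filter
            (fun bc : (J → Bool) × (K → Bool) => φ bc.1 bc.2 = true),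
          (∏ j : J, w j (bc.1 j)) *
            ∏ k : K, (if bc.2 k then (S k).indicator (1 : (Fin N → ℝ) → ℝ≥0∞) x
              else (S k)ᶜ.indicator (1 : (Fin N → ℝ) → ℝ≥0∞) x)) * g x ∂volume)
      = ∫⁻ x, ∑ bc ∈ Finset.univ.filter
          (fun bc : (J → Bool) × (K → Bool) => φ bc.1 bc.2 = true),
        (C bc.2).indicator (fun y => (∏ j : J, w j (bc.1 j)) * g y) x ∂volume := by
        exact lintegral_congr hint
    _ = ∑ bc ∈ Finset.univ.filter
          (fun bc : (J → Bool) × (K → Bool) => φ bc.1 bc.2 = true),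
        ∫⁻ x, (C bc.2).indicator (fun y => (∏ j : J, w j (bc.1 j)) * g y) x ∂volume := by
        exact lintegral_finset_sum _ fun bc _ => hmeas bc
    _ = ∑ bc ∈ Finset.univ.filter
          (fun bc : (J → Bool) × (K → Bool) => φ bc.1 bc.2 = true),
        ∫⁻ x in C bc.2, (∏ j : J, w j (bc.1 j)) * g x ∂volume := by
        exact Finset.sum_congr rfl fun bc _ => lintegral_indicator (hCmeas bc.2) _
    _ = ∑ b : J → Bool, ∑ c ∈ Finset.univ.filter (fun c => φ b c = true),
        ∫⁻ x in C c, (∏ j : J, w j (b j)) * g x ∂volume := by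
        rw [Finset.sum_filter, Fintype.sum_prod_type]
        exact Finset.sum_congr rfl fun b _ => by rw [Finset.sum_filter]
    _ = ∑ b : J → Bool,
        ∫⁻ x in {x : Fin N → ℝ | φ b (fun k => decide (x ∈ S k)) = true},
          (∏ j : J, w j (b j)) * g x ∂volume := by
        refine Finset.sum_congr rfl fun b _ => ?_
        set F : (Fin N → ℝ) → ℝ≥0∞ := fun x => (∏ j : J, w j (b j)) * g x
        have hFmeas : Measurable F := measurable_const.mul hgmeas
        have hAmeas : MeasurableSet {x : Fin N → ℝ | φ b (fun k => decide (x ∈ S k)) = true} := by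
          have : {x : Fin N → ℝ | φ b (fun k => decide (x ∈ S k)) = true}
              = ⋃ c ∈ Finset.univ.filter (fun c => φ b c = true), C c := by
            ext x
            simp only [Set.mem_setOf_eq, Set.mem_iUnion, Finset.mem_filter,
              Finset.mem_univ, true_and, hC]
            constructor
            · intro h
              exact ⟨fun k => decide (x ∈ S k), h, rfl⟩
            · rintro ⟨c, hc, rfl⟩
              exact hc
          rw [this]
          exact MeasurableSet.biUnion (Finset.countable_toSet _) fun c _ => hCmeas c
        rw [← lintegral_indicator hAmeas]
        have key : ∀ x : Fin N → ℝ,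
            ({x : Fin N → ℝ | φ b (fun k => decide (x ∈ S k)) = true}).indicator F x
            = ∑ c ∈ Finset.univ.filter (fun c => φ b c = true), (C c).indicator F x := by
          intro x
          set d : K → Bool := fun k => decide (x ∈ S k) with hd
          rw [Finset.sum_filter]
          rw [Finset.sum_eq_single_of_mem d (Finset.mem_univ d)
            (fun c _ hcd => by
              have hx : x ∉ C c := fun hxc => hcd (hxc ▸ rfl)
              simp [Set.indicator_of_notMem hx])]
          have hxd : x ∈ C d := rfl
          by_cases hφ : φ b d = true
          · simp [hφ, show φ b (fun k => decide (x ∈ S k)) = true from hφ, Set.indicator_of_mem hxd, Set.indicator_of_mem, Set.mem_setOf_eq]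
          · have hx : x ∉ {x : Fin N → ℝ | φ b (fun k => decide (x ∈ S k)) = true} := hφ
            simp [hφ, show ¬ φ b (fun k => decide (x ∈ S k)) = true from hφ, Set.indicator_of_notMem hx]
        rw [lintegral_congr key, lintegral_finset_sum _
          (fun c _ => hFmeas.indicator (hCmeas c))]
        exact Finset.sum_congr rfl fun c _ => (lintegral_indicator (hCmeas c) _).symm
end
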